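/- Let ρ, a : ℝ³ → ℝ be twice continuously differentiable. Then for every point x ∈ ℝ³ and every fixed index i₁ ∈ {1,2,3}, the sum over all indices i₂,i₃,j₁,j₂,j₃,k₁,k₂,k₃ ∈ {1,2,3} of ε^{i₁i₂i₃}·ε^{j₁j₂j₃}·ε^{k₁k₂k₃}·ρ(x)²·ρ_{i₂j₁}(x)·a_{i₃k₁}(x)·a_{j₃k₂}(x)·a_{j₂k₃}(x) equals 0. (Equivalently, the 1-vector field on ℝ³ encoded by the vanishing sunflower micro-graph with encoding (0,1,4; 1,6,5; 4,5,6), built of three copies of the 3D Nambu–Poisson bracket ρ·det(∂(f,g,a)/∂x), is identically zero.) -/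

import Mathlib

noncomputable section

/-- The totally antisymmetric Levi-Civita symbol on `d` indices:
`levicivita m` is the sign of the permutation `(m 0, …, m (d-1))` when the indices
are pairwise distinct (so `levicivita id = 1`), and `0` otherwise. -/
def levicivita {d : ℕ} (m : Fin d → Fin d) : ℝ :=
  Matrix.det (Matrix.of fun p q => if m p = q then (1 : ℝ) else 0)

/-- Partial derivative `∂f/∂x^i` at `x`. -/
def pd {d : ℕ} (f : (Fin d → ℝ) → ℝ) (i : Fin d) (x : Fin d → ℝ) : ℝ :=
  fderiv ℝ f x (Pi.single i 1)

/-- Second partial derivative `f_{pq} = ∂²f/∂x^p∂x^q` at `x`. -/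
def pd2 {d : ℕ} (f : (Fin d → ℝ) → ℝ) (p q : Fin d) (x : Fin d → ℝ) : ℝ :=
  pd (pd f q) p x

lemma lc000 : levicivita ![(0:Fin 3), 0, 0] = 0 := by simp [levicivita, Matrix.det_fin_three]
lemma lc001 : levicivita ![(0:Fin 3), 0, 1] = 0 := by simp [levicivita, Matrix.det_fin_three]
lemma lc002 : levicivita ![(0:Fin 3), 0, 2] = 0 := by simp [levicivita, Matrix.det_fin_three]
lemma lc010 : levicivita ![(0:Fin 3), 1, 0] = 0 := by simp [levicivita, Matrix.det_fin_three]
lemma lc011 : levicivita ![(0:Fin 3), 1, 1] = 0 := by simp [levicivita, Matrix.det_fin_three]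
lemma lc012 : levicivita ![(0:Fin 3), 1, 2] = 1 := by simp [levicivita, Matrix.det_fin_three]
lemma lc020 : levicivita ![(0:Fin 3), 2, 0] = 0 := by simp [levicivita, Matrix.det_fin_three]
lemma lc021 : levicivita ![(0:Fin 3), 2, 1] = -1 := by simp [levicivita, Matrix.det_fin_three]
lemma lc022 : levicivita ![(0:Fin 3), 2, 2] = 0 := by simp [levicivita, Matrix.det_fin_three]
lemma lc100 : levicivita ![(1:Fin 3), 0, 0] = 0 := by simp [levicivita, Matrix.det_fin_three]
lemma lc101 : levicivita ![(1:Fin 3), 0, 1] = 0 := by simp [levicivita, Matrix.det_fin_three]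
lemma lc102 : levicivita ![(1:Fin 3), 0, 2] = -1 := by simp [levicivita, Matrix.det_fin_three]
lemma lc110 : levicivita ![(1:Fin 3), 1, 0] = 0 := by simp [levicivita, Matrix.det_fin_three]
lemma lc111 : levicivita ![(1:Fin 3), 1, 1] = 0 := by simp [levicivita, Matrix.det_fin_three]
lemma lc112 : levicivita ![(1:Fin 3), 1, 2] = 0 := by simp [levicivita, Matrix.det_fin_three]
lemma lc120 : levicivita ![(1:Fin 3), 2, 0] = 1 := by simp [levicivita, Matrix.det_fin_three]
lemma lc121 : levicivita ![(1:Fin 3), 2, 1] = 0 := by simp [levicivita, Matrix.det_fin_three]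
lemma lc122 : levicivita ![(1:Fin 3), 2, 2] = 0 := by simp [levicivita, Matrix.det_fin_three]
lemma lc200 : levicivita ![(2:Fin 3), 0, 0] = 0 := by simp [levicivita, Matrix.det_fin_three]
lemma lc201 : levicivita ![(2:Fin 3), 0, 1] = 1 := by simp [levicivita, Matrix.det_fin_three]
lemma lc202 : levicivita ![(2:Fin 3), 0, 2] = 0 := by simp [levicivita, Matrix.det_fin_three]
lemma lc210 : levicivita ![(2:Fin 3), 1, 0] = -1 := by simp [levicivita, Matrix.det_fin_three]
lemma lc211 : levicivita ![(2:Fin 3), 1, 1] = 0 := by simp [levicivita, Matrix.det_fin_three]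
lemma lc212 : levicivita ![(2:Fin 3), 1, 2] = 0 := by simp [levicivita, Matrix.det_fin_three]
lemma lc220 : levicivita ![(2:Fin 3), 2, 0] = 0 := by simp [levicivita, Matrix.det_fin_three]
lemma lc221 : levicivita ![(2:Fin 3), 2, 1] = 0 := by simp [levicivita, Matrix.det_fin_three]
lemma lc222 : levicivita ![(2:Fin 3), 2, 2] = 0 := by simp [levicivita, Matrix.det_fin_three]

lemma ksum (u v w : ℝ) (B C D : Fin 3 → ℝ) :
    (∑ k₁ : Fin 3, ∑ k₂ : Fin 3, ∑ k₃ : Fin 3,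
      u * levicivita ![k₁, k₂, k₃] * v * w * B k₁ * C k₂ * D k₃)
    = u * v * w * (B 0 * C 1 * D 2 - B 0 * C 2 * D 1 - B 1 * C 0 * D 2
        + B 1 * C 2 * D 0 + B 2 * C 0 * D 1 - B 2 * C 1 * D 0) := by
  simp only [Fin.sum_univ_three, lc000, lc001, lc002, lc010, lc011, lc012, lc020, lc021, lc022,
    lc100, lc101, lc102, lc110, lc111, lc112, lc120, lc121, lc122,
    lc200, lc201, lc202, lc210, lc211, lc212, lc220, lc221, lc222]
  ring

set_option maxHeartbeats 4000000 in
lemma key (R A : Fin 3 → Fin 3 → ℝ) (c : ℝ)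
    (h1 : R 1 0 = R 0 1) (h2 : R 2 0 = R 0 2) (h3 : R 2 1 = R 1 2) (i₁ : Fin 3) :
    ∑ i₂ : Fin 3, ∑ i₃ : Fin 3, ∑ j₁ : Fin 3, ∑ j₂ : Fin 3, ∑ j₃ : Fin 3,
    ∑ k₁ : Fin 3, ∑ k₂ : Fin 3, ∑ k₃ : Fin 3,
      levicivita ![i₁, i₂, i₃] * levicivita ![j₁, j₂, j₃] * levicivita ![k₁, k₂, k₃] *
        c * R i₂ j₁ * A i₃ k₁ * A j₃ k₂ * A j₂ k₃ = 0 := by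
  simp only [ksum]
  have hi : i₁ = 0 ∨ i₁ = 1 ∨ i₁ = 2 := by omega
  rcases hi with rfl | rfl | rfl <;>
  · simp only [Fin.sum_univ_three]
    simp only [lc000, lc001, lc002, lc010, lc011, lc012, lc020, lc021, lc022,
      lc100, lc101, lc102, lc110, lc111, lc112, lc120, lc121, lc122,
      lc200, lc201, lc202, lc210, lc211, lc212, lc220, lc221, lc222,
      zero_mul, mul_zero, add_zero, zero_add, h1, h2, h3]
    ring

lemma pd2_symm {d : ℕ} {f : (Fin d → ℝ) → ℝ} (hf : ContDiff ℝ 2 f) (p q : Fin d)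
    (x : Fin d → ℝ) : pd2 f p q x = pd2 f q p x := by
  have hdf : Differentiable ℝ (fderiv ℝ f) := by
    have : ContDiff ℝ 1 (fderiv ℝ f) := hf.fderiv_right (by norm_num)
    exact this.differentiable (by norm_num)
  have key : ∀ u v : Fin d → ℝ,
      fderiv ℝ (fun y => fderiv ℝ f y v) x u = fderiv ℝ (fderiv ℝ f) x u v := by
    intro u v
    rw [fderiv_clm_apply (hdf x) (differentiableAt_const v)]
    simp
  have hsym := (hf.contDiffAt (x := x)).isSymmSndFDerivAt (by simp [minSmoothness_of_isRCLikeNormedField])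
  unfold pd2 pd
  rw [key, key, hsym.eq]

/-- The 1-vector field on ℝ³ encoded by the vanishing sunflower micro-graph with
encoding (0,1,4; 1,6,5; 4,5,6), built of three copies of the 3D Nambu–Poisson
bracket `ρ·det(∂(f,g,a)/∂x)`, is identically zero. -/
theorem sunflower_micrograph_no10_vanishes_3d
    (ρ a : (Fin 3 → ℝ) → ℝ) (hρ : ContDiff ℝ 2 ρ) (ha : ContDiff ℝ 2 a)
    (x : Fin 3 → ℝ) (i₁ : Fin 3) :
    ∑ i₂ : Fin 3, ∑ i₃ : Fin 3, ∑ j₁ : Fin 3, ∑ j₂ : Fin 3, ∑ j₃ : Fin 3,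
    ∑ k₁ : Fin 3, ∑ k₂ : Fin 3, ∑ k₃ : Fin 3,
      levicivita ![i₁, i₂, i₃] * levicivita ![j₁, j₂, j₃] * levicivita ![k₁, k₂, k₃] *
        ρ x ^ 2 * pd2 ρ i₂ j₁ x * pd2 a i₃ k₁ x * pd2 a j₃ k₂ x * pd2 a j₂ k₃ x = 0 := by
  exact key (fun p q => pd2 ρ p q x) (fun p q => pd2 a p q x) (ρ x ^ 2)
    (pd2_symm hρ 1 0 x) (pd2_symm hρ 2 0 x) (pd2_symm hρ 2 1 x) i₁
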